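/- Let u ≥ 2-√2 with u < 1, w > 0, and define ψ(x) = w·(1 - x(1-u)²/(2(1-ux))) for 0 ≤ x ≤ 1, ψ(x) = w·(u/2 + 1/(2x)) for 1 ≤ x ≤ 1/u, ψ(x) = w/x for x ≥ 1/u; and define ψ†(x) = w·(1 - x/4) for x ≤ 2 and ψ†(x) = w/x for x ≥ 2. Then ψ† is convex and ψ†(x) ≤ ψ(x) for all x ≥ 0. -/

import Mathlib

open Set

/-- ψ(x) = φ(1/x): the single-field GL-S value with detection probability `u` and field
weight `w`, as a function of the reciprocal resource ratio. -/
noncomputable def psi (u w x : ℝ) : ℝ :=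
  if x ≤ 1 then w * (1 - x * (1 - u) ^ 2 / (2 * (1 - u * x)))
  else if x ≤ 1 / u then w * (u / 2 + 1 / (2 * x))
  else w / x

/-- The claimed lower convex envelope of ψ in the regime u ≥ 2-√2. -/
noncomputable def psiDag (w x : ℝ) : ℝ :=
  if x ≤ 2 then w * (1 - x / 4) else w / x

lemma lin_deriv (w : ℝ) (x : ℝ) : HasDerivAt (fun y : ℝ => w * (1 - y / 4)) (-(w / 4)) x := by
  have h := (((hasDerivAt_id x).div_const 4).const_sub 1).const_mul w
  exact h.congr_deriv (by ring)

lemma inv_deriv (w : ℝ) {x : ℝ} (hx : x ≠ 0) :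
    HasDerivAt (fun y : ℝ => w / y) (-(w / x ^ 2)) x := by
  have h := (hasDerivAt_inv hx).const_mul w
  simp only [div_eq_mul_inv]
  exact h.congr_deriv (by ring)

lemma junction_deriv {w : ℝ} : HasDerivAt (psiDag w) (-(w / 4)) 2 := by
  have ha : HasDerivWithinAt (psiDag w) (-(w / 4)) (Iic 2) 2 := by
    refine ((lin_deriv w 2).hasDerivWithinAt).congr ?_ ?_
    · intro y hy; simp [psiDag, (mem_Iic.mp hy)]
    · simp [psiDag]
  have hb : HasDerivWithinAt (psiDag w) (-(w / 4)) (Ici 2) 2 := by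
    have h := (inv_deriv w (by norm_num : (2:ℝ) ≠ 0)).hasDerivWithinAt (s := Ici 2)
    have h' : HasDerivWithinAt (fun y : ℝ => w / y) (-(w / 4)) (Ici 2) 2 := by
      exact h.congr_deriv (by norm_num)
    refine h'.congr ?_ ?_
    · intro y hy
      rcases eq_or_lt_of_le (mem_Ici.mp hy) with h2 | h2
      · rw [← h2]; simp [psiDag]; ring
      · simp [psiDag, not_le.mpr h2]
    · simp [psiDag]; ring
  have := ha.union hb
  rw [Iic_union_Ici] at this
  exact hasDerivWithinAt_univ.mp this

lemma psiDag_hasDeriv {w : ℝ} {x : ℝ} (hx : 0 < x) :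
    HasDerivAt (psiDag w) (if x ≤ 2 then -(w / 4) else -(w / x ^ 2)) x := by
  rcases lt_trichotomy x 2 with h | h | h
  · rw [if_pos h.le]
    refine (lin_deriv w x).congr_of_eventuallyEq ?_
    filter_upwards [Iio_mem_nhds h] with y hy
    simp [psiDag, le_of_lt (mem_Iio.mp hy)]
  · subst h; rw [if_pos le_rfl]; exact junction_deriv
  · rw [if_neg (not_le.mpr h)]
    refine (inv_deriv w (by linarith : x ≠ 0)).congr_of_eventuallyEq ?_
    filter_upwards [Ioi_mem_nhds h] with y hy
    simp [psiDag, not_le.mpr (mem_Ioi.mp hy)]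

/-- For u ∈ [2-√2, 1) and w > 0, the function ψ† is convex on [0,∞) and
is dominated by ψ there: ψ†(x) ≤ ψ(x) for all x ≥ 0. -/
theorem stmt_15 (u w : ℝ) (hu : 2 - Real.sqrt 2 ≤ u) (hu1 : u < 1) (hw : 0 < w) :
    ConvexOn ℝ (Ici 0) (psiDag w) ∧ ∀ x : ℝ, 0 ≤ x → psiDag w x ≤ psi u w x := by
  have hs : Real.sqrt 2 ^ 2 = 2 := Real.sq_sqrt (by norm_num)
  have hsnn : (0:ℝ) ≤ Real.sqrt 2 := Real.sqrt_nonneg 2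
  have hs15 : Real.sqrt 2 ≤ 1.5 := by nlinarith
  have hu0 : (0:ℝ) < u := by linarith
  have huh : (1:ℝ)/2 ≤ u := by linarith
  have hsq : (2 - u) ^ 2 ≤ 2 := by nlinarith
  constructor
  · -- convexity
    have hIci : interior (Ici (0:ℝ)) = Ioi 0 := interior_Ici
    have hdiffOn : DifferentiableOn ℝ (psiDag w) (interior (Ici (0:ℝ))) := by
      rw [hIci]
      exact fun x hx => (psiDag_hasDeriv (mem_Ioi.mp hx)).differentiableAt.differentiableWithinAt
    have hderiv_eq : ∀ x ∈ Ioi (0:ℝ),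
        deriv (psiDag w) x = if x ≤ 2 then -(w / 4) else -(w / x ^ 2) :=
      fun x hx => (psiDag_hasDeriv (mem_Ioi.mp hx)).deriv
    have hmono : MonotoneOn (deriv (psiDag w)) (interior (Ici (0:ℝ))) := by
      rw [hIci]
      intro x hx y hy hxy
      rw [hderiv_eq x hx, hderiv_eq y hy]
      have hx0 : (0:ℝ) < x := hx
      have hy0 : (0:ℝ) < y := hy
      by_cases hx2 : x ≤ 2 <;> by_cases hy2 : y ≤ 2 <;> simp [hx2, hy2]
      · -- x ≤ 2 < y : w/y² ≤ w/4
        have h2y : (2:ℝ) < y := not_le.mp hy2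
        have : w / y ^ 2 ≤ w / 4 := by
          rw [div_le_div_iff₀ (by positivity) (by norm_num)]
          nlinarith [mul_le_mul_of_nonneg_left (by nlinarith : (4:ℝ) ≤ y ^ 2) hw.le]
        linarith
      · exact absurd hxy (by push_neg; exact lt_of_le_of_lt hy2 (not_le.mp hx2))
      · -- 2 < x ≤ y : w/y² ≤ w/x²
        have : w / y ^ 2 ≤ w / x ^ 2 := by
          rw [div_le_div_iff₀ (by positivity) (by positivity)]
          nlinarith [mul_le_mul_of_nonneg_left (by nlinarith : x ^ 2 ≤ y ^ 2) hw.le]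
        linarith
    have hcont : ContinuousOn (psiDag w) (Ici 0) := by
      intro x hx
      rcases lt_trichotomy x 2 with h | h | h
      · have he : psiDag w =ᶠ[nhds x] fun y => w * (1 - y / 4) := by
          filter_upwards [Iio_mem_nhds h] with y hy
          simp [psiDag, le_of_lt (mem_Iio.mp hy)]
        exact (((lin_deriv w x).continuousAt).congr he.symm).continuousWithinAt
      · subst h; exact junction_deriv.continuousAt.continuousWithinAt
      · have he : psiDag w =ᶠ[nhds x] fun y => w / y := by
          filter_upwards [Ioi_mem_nhds h] with y hy
          simp [psiDag, not_le.mpr (mem_Ioi.mp hy)]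
        exact (((inv_deriv w (by linarith : x ≠ 0)).continuousAt).congr he.symm).continuousWithinAt
    exact hmono.convexOn_of_deriv (convex_Ici 0) hcont hdiffOn
  · -- domination
    intro x hx
    unfold psi psiDag
    by_cases hx1 : x ≤ 1
    · have hx2 : x ≤ 2 := by linarith
      rw [if_pos hx2, if_pos hx1]
      have hux : u * x < 1 := lt_of_le_of_lt (by nlinarith) hu1
      have key : x * (1 - u) ^ 2 / (2 * (1 - u * x)) ≤ x / 4 := by
        rw [div_le_iff₀ (by linarith)]
        nlinarith [mul_nonneg hx (mul_nonneg (by linarith : (0:ℝ) ≤ 1 - u) (by linarith : (0:ℝ) ≤ u - 1/2)), mul_nonneg hx (mul_nonneg hu0.le (by linarith : (0:ℝ) ≤ 1 - x))]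
      have : (1:ℝ) - x / 4 ≤ 1 - x * (1 - u) ^ 2 / (2 * (1 - u * x)) := by linarith
      exact mul_le_mul_of_nonneg_left this hw.le
    · push_neg at hx1
      have hx0 : (0:ℝ) < x := by linarith
      by_cases hxu : x ≤ 1 / u
      · have hx2 : x ≤ 2 := by
          have : 1 / u ≤ 2 := by rw [div_le_iff₀ hu0]; linarith
          linarith
        rw [if_pos hx2, if_neg (not_le.mpr hx1), if_pos hxu]
        have hq : 0 ≤ x ^ 2 - (4 - 2 * u) * x + 2 := by nlinarith [sq_nonneg (x - (2 - u))]
        have key : (1:ℝ) - x / 4 ≤ u / 2 + 1 / (2 * x) := by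
          rw [← sub_nonneg]
          have heq : u / 2 + 1 / (2 * x) - (1 - x / 4) = (x ^ 2 - (4 - 2 * u) * x + 2) / (4 * x) := by
            field_simp; ring
          rw [heq]
          exact div_nonneg hq (by linarith)
        exact mul_le_mul_of_nonneg_left key hw.le
      · rw [if_neg (not_le.mpr hx1), if_neg hxu]
        by_cases hx2 : x ≤ 2
        · rw [if_pos hx2]
          have heq : w / x - w * (1 - x / 4) = w * (x - 2) ^ 2 / (4 * x) := by
            field_simp; ring
          have : 0 ≤ w / x - w * (1 - x / 4) := by rw [heq]; positivity
          linarith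
        · rw [if_neg hx2]
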